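/- If there exists a matrix A with rows indexed by the n-element column-index set 𝒱 and columns indexed by (V × {1,2,3}) ⊔ E such that ‖M(G) − SA‖ ≤ √(m t² + 4 n t⁶ + m t¹⁰), then there exists a map ψ : V → {1,2,3} such that 𝒱 = {(v, ψ(v)) : v ∈ V}. -/

import Mathlib

open Matrix

/-- The Frobenius norm of a real matrix: the square root of the sum of squares of entries. -/
noncomputable def frob {α β : Type*} [Fintype α] [Fintype β] (X : Matrix α β ℝ) : ℝ :=
  Real.sqrt (∑ i, ∑ j, X i j ^ 2)

/-- The matrix `M(G)` of the reduction: rows indexed by `V ⊕ {1,2,3} ⊕ {ε}`,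
columns indexed by `(V × {1,2,3}) ⊕ E`. -/
def MG {V : Type*} [Fintype V] [DecidableEq V] (G : SimpleGraph V) [DecidableRel G.Adj]
    (t : ℝ) : Matrix (V ⊕ Fin 3 ⊕ Unit) ((V × Fin 3) ⊕ G.edgeSet) ℝ :=
  fun r c =>
    match r, c with
    | Sum.inl u, Sum.inl (v, _) => if u = v then (1 : ℝ) else 0
    | Sum.inl u, Sum.inr e => if u ∈ (e : Sym2 V) then t ^ 2 else 0
    | Sum.inr (Sum.inl i), Sum.inl (_, j) => if i = j then t ^ 3 else 0
    | Sum.inr (Sum.inl _), Sum.inr _ => t ^ 5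
    | Sum.inr (Sum.inr _), Sum.inl _ => 0
    | Sum.inr (Sum.inr _), Sum.inr _ => t

set_option linter.unusedSectionVars false
set_option maxHeartbeats 1000000

open scoped RealInnerProductSpace

section Euclid

variable {ι : Type*} [Fintype ι] [DecidableEq ι]

lemma esq (x : EuclideanSpace ℝ ι) : ‖x‖^2 = ∑ i, (x i)^2 := by
  rw [EuclideanSpace.norm_eq, Real.sq_sqrt (by positivity)]
  simp [sq_abs]

lemma dist_proj_le (U : Submodule ℝ (EuclideanSpace ℝ ι)) [CompleteSpace U]
    (x y : EuclideanSpace ℝ ι) (hy : y ∈ U) :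
    ‖x - U.orthogonalProjection x‖^2 ≤ ‖x - y‖^2 := by
  have hdecomp : x - y = (x - U.orthogonalProjection x) + ((U.orthogonalProjection x : EuclideanSpace ℝ ι) - y) := by abel
  have hmem : (U.orthogonalProjection x : EuclideanSpace ℝ ι) - y ∈ U :=
    U.sub_mem (U.orthogonalProjection x).2 hy
  have h0 : ⟪x - U.orthogonalProjection x, (U.orthogonalProjection x : EuclideanSpace ℝ ι) - y⟫ = 0 :=
    Submodule.starProjection_inner_eq_zero x _ hmem
  rw [hdecomp, norm_add_sq_real, h0]
  nlinarith [sq_nonneg ‖(U.orthogonalProjection x : EuclideanSpace ℝ ι) - y‖]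

lemma proj_normsq (U : Submodule ℝ (EuclideanSpace ℝ ι)) [CompleteSpace U]
    (x : EuclideanSpace ℝ ι) :
    ‖(U.orthogonalProjection x : EuclideanSpace ℝ ι)‖^2
      = ∑ j, ⟪((stdOrthonormalBasis ℝ U) j : EuclideanSpace ℝ ι), x⟫^2 := by
  set b := stdOrthonormalBasis ℝ U
  have h1 : ∀ u : U, ‖(u : EuclideanSpace ℝ ι)‖^2 = ∑ j, ⟪((b j : U) : EuclideanSpace ℝ ι), (u : EuclideanSpace ℝ ι)⟫^2 := by
    intro u
    have hcoe : ‖(u : EuclideanSpace ℝ ι)‖ = ‖u‖ := rfl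
    rw [hcoe, ← b.repr.norm_map u, esq]
    congr 1
    ext j
    rw [b.repr_apply_apply u j]
    rfl
  have h2 : ∀ j, ⟪((b j : U) : EuclideanSpace ℝ ι), (U.orthogonalProjection x : EuclideanSpace ℝ ι)⟫
      = ⟪((b j : U) : EuclideanSpace ℝ ι), x⟫ := by
    intro j
    have h0 : ⟪x - U.orthogonalProjection x, ((b j : U) : EuclideanSpace ℝ ι)⟫ = 0 :=
      Submodule.starProjection_inner_eq_zero x _ (b j).2
    rw [real_inner_comm] at h0
    rw [inner_sub_right] at h0
    linarith
  rw [h1 (U.orthogonalProjection x)]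
  simp_rw [h2]

lemma sum_dist_proj (U : Submodule ℝ (EuclideanSpace ℝ ι)) [CompleteSpace U] :
    ∑ i, ‖EuclideanSpace.single i (1:ℝ) - U.orthogonalProjection (EuclideanSpace.single i 1)‖^2
      = (Fintype.card ι : ℝ) - Module.finrank ℝ U := by
  set b := stdOrthonormalBasis ℝ U
  have hpyth : ∀ i : ι,
      ‖EuclideanSpace.single i (1:ℝ) - U.orthogonalProjection (EuclideanSpace.single i 1)‖^2
      = 1 - ‖(U.orthogonalProjection (EuclideanSpace.single i (1:ℝ)) : EuclideanSpace ℝ ι)‖^2 := by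
    intro i
    set x : EuclideanSpace ℝ ι := EuclideanSpace.single i (1:ℝ) with hx
    have hd : x = (x - U.orthogonalProjection x) + (U.orthogonalProjection x : EuclideanSpace ℝ ι) := by abel
    have h0 : ⟪x - U.orthogonalProjection x, (U.orthogonalProjection x : EuclideanSpace ℝ ι)⟫ = 0 :=
      Submodule.starProjection_inner_eq_zero x _ (U.orthogonalProjection x).2
    have hn : ‖x‖^2 = ‖x - U.orthogonalProjection x‖^2 + ‖(U.orthogonalProjection x : EuclideanSpace ℝ ι)‖^2 := by
      nth_rewrite 1 [hd]
      rw [norm_add_sq_real, h0]; ring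
    have hx1 : ‖x‖^2 = 1 := by rw [hx, EuclideanSpace.norm_single]; norm_num
    linarith
  simp_rw [hpyth, Finset.sum_sub_distrib]
  have hsum : ∑ i, ‖(U.orthogonalProjection (EuclideanSpace.single i (1:ℝ)) : EuclideanSpace ℝ ι)‖^2
      = (Module.finrank ℝ U : ℝ) := by
    simp_rw [proj_normsq]
    rw [Finset.sum_comm]
    have : ∀ j, ∑ i, ⟪((b j : U) : EuclideanSpace ℝ ι), EuclideanSpace.single i (1:ℝ)⟫^2 = 1 := by
      intro j
      have hb : ∀ i : ι, ⟪((b j : U) : EuclideanSpace ℝ ι), EuclideanSpace.single i (1:ℝ)⟫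
          = ((b j : U) : EuclideanSpace ℝ ι) i := by
        intro i
        rw [EuclideanSpace.inner_single_right]
        simp
      simp_rw [hb]
      have h1 : ‖((b j : U) : EuclideanSpace ℝ ι)‖ = 1 := by
        have := b.orthonormal.1 j
        exact this
      have := esq ((b j : U) : EuclideanSpace ℝ ι)
      rw [h1] at this
      simpa using this.symm
    refine (Finset.sum_congr rfl (fun j _ => this j)).trans ?_
    simp
  rw [hsum]
  simp [Finset.card_univ]

end Euclid

lemma sum_comp_le {α β : Type*} [Fintype α] [Fintype β] [DecidableEq β] (f : β → ℝ)
    (hf : ∀ b, 0 ≤ f b) (g : α → β) (hg : Function.Injective g) :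
    ∑ a, f (g a) ≤ ∑ b, f b := by
  rw [← Finset.sum_image (f := f) (g := g) (fun a _ b _ h => hg h)]
  exact Finset.sum_le_sum_of_subset_of_nonneg (Finset.subset_univ _) (fun b _ _ => hf b)

lemma filter_mem_sym2_card_le {V : Type*} [Fintype V] [DecidableEq V] (s : Sym2 V) :
    (Finset.univ.filter (fun v => v ∈ s)).card ≤ 2 := by
  induction s using Sym2.ind with
  | _ a b =>
    have hsub : (Finset.univ.filter (fun v => v ∈ s(a, b))) ⊆ {a, b} := by
      intro v hv
      rw [Finset.mem_filter] at hv
      rw [Sym2.mem_iff] at hv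
      rcases hv.2 with h | h <;> simp [h]
    exact le_trans (Finset.card_le_card hsub) ((Finset.card_insert_le a {b}).trans (by simp))

lemma missing_big {V : Type*} [Fintype V] [DecidableEq V] (G : SimpleGraph V) [DecidableRel G.Adj]
    (t : ℝ) (ht0 : 0 < t)
    (𝒱 : Finset ((V × Fin 3) ⊕ G.edgeSet)) (hcard : 𝒱.card = Fintype.card V)
    (v0 : V) (hv0 : ∀ i : Fin 3, Sum.inl (v0, i) ∉ 𝒱)
    (A : Matrix 𝒱 ((V × Fin 3) ⊕ G.edgeSet) ℝ) :
    1 - 2 * t^2 ≤ ∑ r, ∑ c, ((MG G t - Matrix.of (fun r (c : 𝒱) => MG G t r c.val) * A) r c)^2 := by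
  classical
  set R : Matrix (V ⊕ Fin 3 ⊕ Unit) ((V × Fin 3) ⊕ G.edgeSet) ℝ :=
    MG G t - Matrix.of (fun r (c : 𝒱) => MG G t r c.val) * A with hR
  set Miss : Finset V := Finset.univ.filter (fun v => ∀ i : Fin 3, Sum.inl (v, i) ∉ 𝒱) with hMiss
  have hv0' : v0 ∈ Miss := by simp [hMiss, hv0]
  set ED : Finset ((V × Fin 3) ⊕ G.edgeSet) := 𝒱.filter (fun c => ¬ c.isLeft) with hED
  -- combinatorics: ED.card ≤ Miss.card
  have hkμ : ED.card ≤ Miss.card := by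
    have hsplit := Finset.card_filter_add_card_filter_not
      (s := 𝒱) (p := fun c : (V × Fin 3) ⊕ G.edgeSet => c.isLeft = true)
    have hEDeq : (𝒱.filter fun c => ¬ ((fun c : (V × Fin 3) ⊕ G.edgeSet => c.isLeft = true) c)) = ED := by
      rw [hED]
    rw [hEDeq, hcard] at hsplit
    have hsplit2 := Finset.card_filter_add_card_filter_not
      (s := (Finset.univ : Finset V)) (p := fun v : V => ∀ i : Fin 3, Sum.inl (v, i) ∉ 𝒱)
    rw [← hMiss, Finset.card_univ] at hsplit2
    have hcov : (Finset.univ.filter (fun a : V => ¬ ∀ i : Fin 3, Sum.inl (a, i) ∉ 𝒱)).card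
        ≤ (𝒱.filter (fun c : (V × Fin 3) ⊕ G.edgeSet => c.isLeft = true)).card := by
      have hex : ∀ v : V, v ∈ Finset.univ.filter (fun a : V => ¬ ∀ i : Fin 3, Sum.inl (a, i) ∉ 𝒱) →
          ∃ i : Fin 3, Sum.inl (v, i) ∈ 𝒱 := by
        intro v hv
        rw [Finset.mem_filter] at hv
        have := hv.2
        push_neg at this
        simpa using this
      apply Finset.card_le_card_of_injOn
        (fun v => if h : ∃ i : Fin 3, Sum.inl (v, i) ∈ 𝒱 then (Sum.inl (v, h.choose) : (V × Fin 3) ⊕ G.edgeSet) else Sum.inl (v, 0))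
      · intro v hv
        have h := hex v hv
        simp only [dif_pos h]
        exact Finset.mem_filter.mpr ⟨h.choose_spec, rfl⟩
      · intro a ha b hb hab
        rw [Finset.mem_coe] at ha hb
        have hA' := hex a ha
        have hB' := hex b hb
        simp only at hab
        rw [dif_pos hA', dif_pos hB'] at hab
        have := Sum.inl_injective hab
        exact (Prod.ext_iff.mp this).1
    omega
  -- the Euclidean setup
  set ι := {v : V // v ∈ Miss} ⊕ Unit with hι
  have rowInj : Function.Injective (fun r : ι => Sum.elim (fun v : {v : V // v ∈ Miss} => (Sum.inl v.1 : V ⊕ Fin 3 ⊕ Unit)) (fun _ => Sum.inr (Sum.inr ())) r) := by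
    rintro (a | a) (b | b) h <;> simp_all
  set rowOf : ι → V ⊕ Fin 3 ⊕ Unit := Sum.elim (fun v => Sum.inl v.1) (fun _ => Sum.inr (Sum.inr ())) with hrowOf
  set vecc : ((V × Fin 3) ⊕ G.edgeSet) → EuclideanSpace ℝ ι := fun c => WithLp.toLp 2 (fun r => MG G t (rowOf r) c) with hvecc
  set U : Submodule ℝ (EuclideanSpace ℝ ι) := Submodule.span ℝ ((ED.image vecc : Finset _) : Set (EuclideanSpace ℝ ι)) with hU
  haveI : CompleteSpace U := FiniteDimensional.complete ℝ U
  have hfinrank : Module.finrank ℝ U ≤ ED.card := by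
    refine le_trans (finrank_span_finset_le_card _) ?_
    exact Finset.card_image_le
  -- vertex columns restrict to zero
  have hzero : ∀ w : V, ∀ j : Fin 3, Sum.inl (w, j) ∈ 𝒱 → vecc (Sum.inl (w, j)) = 0 := by
    intro w j hwj
    ext r
    rcases r with v | u
    · show MG G t (Sum.inl v.1) (Sum.inl (w, j)) = 0
      have hv := (Finset.mem_filter.mp v.2).2
      show (if v.1 = w then (1:ℝ) else 0) = 0
      rw [if_neg]
      intro h
      exact hv j (h ▸ hwj)
    · rfl
  -- every chosen column restricts into U
  have hmemU : ∀ c : ((V × Fin 3) ⊕ G.edgeSet), c ∈ 𝒱 → vecc c ∈ U := by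
    intro c hc
    rcases c with ⟨w, j⟩ | e
    · rw [hzero w j hc]; exact U.zero_mem
    · apply Submodule.subset_span
      simp only [Finset.coe_image, Set.mem_image, Finset.mem_coe]
      exact ⟨Sum.inr e, by simp [hED, hc], rfl⟩
  -- target columns are standard basis vectors
  have htarget : ∀ v : {v : V // v ∈ Miss},
      vecc (Sum.inl (v.1, 0)) = EuclideanSpace.single (Sum.inl v : ι) 1 := by
    intro v
    ext r
    rcases r with w | u
    · show (if w.1 = v.1 then (1:ℝ) else 0) = _
      rw [EuclideanSpace.single_apply]
      by_cases h : w = v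
      · rw [if_pos (by rw [h]), if_pos (by rw [h])]
      · rw [if_neg (fun hh => h (Subtype.ext hh)), if_neg (by simpa using h)]
    · show (0:ℝ) = _
      rw [EuclideanSpace.single_apply, if_neg (by simp)]
  -- the approximation columns lie in U
  have happrox : ∀ v : {v : V // v ∈ Miss},
      WithLp.toLp 2 (fun r => (Matrix.of (fun r (c : 𝒱) => MG G t r c.val) * A) (rowOf r) (Sum.inl (v.1, 0))) ∈ U := by
    intro v
    have heq : WithLp.toLp 2 (fun r => (Matrix.of (fun r (c : 𝒱) => MG G t r c.val) * A) (rowOf r) (Sum.inl (v.1, 0)))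
        = ∑ c : {x // x ∈ 𝒱}, A c (Sum.inl (v.1, 0)) • vecc c.1 := by
      ext r
      show (Matrix.of (fun r (c : 𝒱) => MG G t r c.val) * A) (rowOf r) (Sum.inl (v.1, 0)) = _
      rw [Matrix.mul_apply]
      rw [WithLp.ofLp_sum, Finset.sum_apply]
      apply Finset.sum_congr rfl
      intro c _
      show MG G t (rowOf r) c.1 * A c (Sum.inl (v.1, 0)) = _
      show _ = A c (Sum.inl (v.1, 0)) * vecc c.1 r
      rw [hvecc, mul_comm]
    rw [heq]
    exact Submodule.sum_mem U (fun c _ => Submodule.smul_mem U _ (hmemU c.1 c.2))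
  -- per-vertex inequality
  have hperv : ∀ v : {v : V // v ∈ Miss},
      ‖EuclideanSpace.single (Sum.inl v : ι) (1:ℝ) - U.orthogonalProjection (EuclideanSpace.single (Sum.inl v) 1)‖^2
        ≤ ∑ r : ι, (R (rowOf r) (Sum.inl (v.1, 0)))^2 := by
    intro v
    have h1 := dist_proj_le U (EuclideanSpace.single (Sum.inl v) 1)
      (WithLp.toLp 2 (fun r => (Matrix.of (fun r (c : 𝒱) => MG G t r c.val) * A) (rowOf r) (Sum.inl (v.1, 0)))) (happrox v)
    refine le_trans h1 (le_of_eq ?_)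
    rw [esq]
    apply Finset.sum_congr rfl
    intro r _
    congr 1
    show EuclideanSpace.single (Sum.inl v : ι) (1:ℝ) r
        - (Matrix.of (fun r (c : 𝒱) => MG G t r c.val) * A) (rowOf r) (Sum.inl (v.1, 0)) = _
    rw [← htarget v]
    show vecc (Sum.inl (v.1, 0)) r - _ = _
    rw [hR, Matrix.sub_apply]
  -- epsilon bounds
  have hepsle1 : ‖EuclideanSpace.single (Sum.inr () : ι) (1:ℝ)
      - U.orthogonalProjection (EuclideanSpace.single (Sum.inr ()) 1)‖^2 ≤ 1 := by
    have h := dist_proj_le U (EuclideanSpace.single (Sum.inr ()) 1) 0 U.zero_mem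
    rw [sub_zero] at h
    refine h.trans (le_of_eq ?_)
    rw [EuclideanSpace.norm_single]
    norm_num
  have heps : ED.Nonempty → ‖EuclideanSpace.single (Sum.inr () : ι) (1:ℝ)
      - U.orthogonalProjection (EuclideanSpace.single (Sum.inr ()) 1)‖^2 ≤ 2 * t^2 := by
    rintro ⟨c₀, hc₀⟩
    have hc₀' := Finset.mem_filter.mp hc₀
    rcases c₀ with ⟨w, j⟩ | e
    · simp at hc₀'
    · have hmem : vecc (Sum.inr e) ∈ U := hmemU _ hc₀'.1
      have hy : t⁻¹ • vecc (Sum.inr e) ∈ U := U.smul_mem _ hmem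
      refine le_trans (dist_proj_le U _ _ hy) ?_
      rw [esq]
      have hpt : ∀ r : ι, (EuclideanSpace.single (Sum.inr () : ι) (1:ℝ) r - (t⁻¹ • vecc (Sum.inr e)) r)^2
          = Sum.elim (fun v : {v : V // v ∈ Miss} => if v.1 ∈ (e : Sym2 V) then t^2 else 0) (fun _ => (0:ℝ)) r := by
        intro r
        rcases r with u | u
        · show (EuclideanSpace.single (Sum.inr () : ι) (1:ℝ) (Sum.inl u)
            - t⁻¹ * MG G t (Sum.inl u.1) (Sum.inr e))^2 = _
          rw [EuclideanSpace.single_apply, if_neg (by simp)]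
          show (0 - t⁻¹ * (if u.1 ∈ (e : Sym2 V) then t^2 else 0))^2 = _
          by_cases h : u.1 ∈ (e : Sym2 V)
          · rw [if_pos h]
            show _ = if u.1 ∈ (e : Sym2 V) then t^2 else 0
            rw [if_pos h]
            have ht' : t⁻¹ * t^2 = t := by field_simp
            rw [ht']
            ring
          · rw [if_neg h]
            show _ = if u.1 ∈ (e : Sym2 V) then t^2 else 0
            rw [if_neg h]
            ring
        · show (EuclideanSpace.single (Sum.inr () : ι) (1:ℝ) (Sum.inr u)
            - t⁻¹ * MG G t (Sum.inr (Sum.inr ())) (Sum.inr e))^2 = (0:ℝ)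
          rw [EuclideanSpace.single_apply, if_pos (by simp)]
          show (1 - t⁻¹ * t)^2 = (0:ℝ)
          rw [inv_mul_cancel₀ (ne_of_gt ht0)]
          ring
      calc ∑ r : ι, (EuclideanSpace.single (Sum.inr () : ι) (1:ℝ) r - (t⁻¹ • vecc (Sum.inr e)) r)^2
          = ∑ r : ι, Sum.elim (fun v : {v : V // v ∈ Miss} => if v.1 ∈ (e : Sym2 V) then t^2 else 0) (fun _ => (0:ℝ)) r := by
            exact Finset.sum_congr rfl (fun r _ => hpt r)
        _ = ∑ v : {v : V // v ∈ Miss}, (if v.1 ∈ (e : Sym2 V) then t^2 else 0) := by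
            rw [Fintype.sum_sum_type]; simp
        _ ≤ ∑ v : V, (if v ∈ (e : Sym2 V) then t^2 else 0) := by
            exact sum_comp_le (fun v : V => if v ∈ (e : Sym2 V) then t^2 else 0)
              (fun b => by positivity) (fun v : {v : V // v ∈ Miss} => v.1) Subtype.val_injective
        _ = ((Finset.univ.filter (fun v : V => v ∈ (e : Sym2 V))).card : ℝ) * t^2 := by
            rw [← Finset.sum_filter, Finset.sum_const, nsmul_eq_mul]
        _ ≤ 2 * t^2 := by
            have := filter_mem_sym2_card_le (V := V) (e : Sym2 V)
            have h2 : ((Finset.univ.filter (fun v : V => v ∈ (e : Sym2 V))).card : ℝ) ≤ 2 := by exact_mod_cast this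
            nlinarith [sq_nonneg t]
  -- sum over the missing vertices of distances
  have hcardι : (Fintype.card ι : ℝ) = (Miss.card : ℝ) + 1 := by
    have h1 : Fintype.card ι = Fintype.card {v : V // v ∈ Miss} + Fintype.card Unit :=
      Fintype.card_sum
    rw [h1, Fintype.card_coe, Fintype.card_unit]
    push_cast
    ring
  have hsum3 : ∑ v : {v : V // v ∈ Miss}, ‖EuclideanSpace.single (Sum.inl v : ι) (1:ℝ)
        - U.orthogonalProjection (EuclideanSpace.single (Sum.inl v) 1)‖^2
      = ((Miss.card : ℝ) + 1) - (Module.finrank ℝ U : ℝ)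
        - ‖EuclideanSpace.single (Sum.inr () : ι) (1:ℝ)
            - U.orthogonalProjection (EuclideanSpace.single (Sum.inr ()) 1)‖^2 := by
    have h := sum_dist_proj U
    rw [Fintype.sum_sum_type] at h
    rw [hcardι] at h
    have hunit : ∑ u : Unit, ‖EuclideanSpace.single (Sum.inr u : ι) (1:ℝ)
        - U.orthogonalProjection (EuclideanSpace.single (Sum.inr u) 1)‖^2
        = ‖EuclideanSpace.single (Sum.inr () : ι) (1:ℝ)
            - U.orthogonalProjection (EuclideanSpace.single (Sum.inr ()) 1)‖^2 := by
      simp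
    rw [hunit] at h
    linarith
  -- the key lower bound
  have hfinal : 1 - 2 * t^2 ≤ ∑ v : {v : V // v ∈ Miss}, ‖EuclideanSpace.single (Sum.inl v : ι) (1:ℝ)
        - U.orthogonalProjection (EuclideanSpace.single (Sum.inl v) 1)‖^2 := by
    rcases Finset.eq_empty_or_nonempty ED with hE | hE
    · have hf0 : Module.finrank ℝ U = 0 := by
        have := hfinrank
        rw [hE] at this
        simpa using this
      have h1 : (1:ℝ) ≤ (Miss.card : ℝ) := by
        have : 0 < Miss.card := Finset.card_pos.mpr ⟨v0, hv0'⟩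
        exact_mod_cast this
      rw [hsum3, hf0]
      push_cast
      nlinarith [sq_nonneg t]
    · have h2 := heps hE
      rw [hsum3]
      have hk : (Module.finrank ℝ U : ℝ) ≤ (Miss.card : ℝ) := by
        exact_mod_cast hfinrank.trans hkμ
      linarith
  -- embed into the full sum
  have hsub : ∑ v : {v : V // v ∈ Miss}, ∑ r : ι, (R (rowOf r) (Sum.inl (v.1, 0)))^2
      ≤ ∑ r, ∑ c, (R r c)^2 := by
    have hL : (∑ v : {v : V // v ∈ Miss}, ∑ r : ι, (R (rowOf r) (Sum.inl (v.1, 0)))^2)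
        = ∑ q : {v : V // v ∈ Miss} × ι, (R (rowOf q.2) (Sum.inl (q.1.1, 0)))^2 :=
      (Fintype.sum_prod_type (f := fun q : {v : V // v ∈ Miss} × ι => (R (rowOf q.2) (Sum.inl (q.1.1, 0)))^2)).symm
    have hRt : (∑ r, ∑ c, (R r c)^2)
        = ∑ p : (V ⊕ Fin 3 ⊕ Unit) × ((V × Fin 3) ⊕ G.edgeSet), (R p.1 p.2)^2 :=
      (Fintype.sum_prod_type (f := fun p : (V ⊕ Fin 3 ⊕ Unit) × ((V × Fin 3) ⊕ G.edgeSet) => (R p.1 p.2)^2)).symm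
    rw [hL, hRt]
    apply sum_comp_le (fun p : (V ⊕ Fin 3 ⊕ Unit) × ((V × Fin 3) ⊕ G.edgeSet) => (R p.1 p.2)^2)
      (fun p => sq_nonneg _)
      (fun q : {v : V // v ∈ Miss} × ι => ((rowOf q.2 : V ⊕ Fin 3 ⊕ Unit), (Sum.inl (q.1.1, 0) : (V × Fin 3) ⊕ G.edgeSet)))
    rintro ⟨a, ra⟩ ⟨b, rb⟩ hab
    simp only [Prod.mk.injEq] at hab
    have h1 : ra = rb := rowInj hab.1
    have h2 := Sum.inl_injective hab.2
    have h3 : a = b := Subtype.ext (Prod.ext_iff.mp h2).1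
    rw [h1, h3]
  calc (1:ℝ) - 2 * t^2
      ≤ ∑ v : {v : V // v ∈ Miss}, ‖EuclideanSpace.single (Sum.inl v : ι) (1:ℝ)
          - U.orthogonalProjection (EuclideanSpace.single (Sum.inl v) 1)‖^2 := hfinal
    _ ≤ ∑ v : {v : V // v ∈ Miss}, ∑ r : ι, (R (rowOf r) (Sum.inl (v.1, 0)))^2 :=
        Finset.sum_le_sum (fun v _ => hperv v)
    _ ≤ ∑ r, ∑ c, (R r c)^2 := hsub



/-- If some `A` achieves `‖M(G) - S A‖ ≤ √(m t² + 4 n t⁶ + m t¹⁰)`, then the `n`-element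
column-index set `𝒱` has the form `{(v, ψ(v)) : v ∈ V}` for some map `ψ : V → {1,2,3}`. -/
theorem good_column_set_is_graph_of_map
    {V : Type*} [Fintype V] [DecidableEq V] (G : SimpleGraph V) [DecidableRel G.Adj]
    (n m : ℕ) (hn : n = Fintype.card V) (hm : m = G.edgeFinset.card)
    (hn1 : 1 ≤ n) (hm1 : 1 ≤ m)
    (t : ℝ) (ht : t = 1 / (4 * (m + n) ^ 3))
    (𝒱 : Finset ((V × Fin 3) ⊕ G.edgeSet)) (hcard : 𝒱.card = n)
    (hA : ∃ A : Matrix 𝒱 ((V × Fin 3) ⊕ G.edgeSet) ℝ,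
      frob (MG G t - Matrix.of (fun r (c : 𝒱) => MG G t r c.val) * A) ≤
        Real.sqrt (m * t ^ 2 + 4 * n * t ^ 6 + m * t ^ 10)) :
    ∃ ψ : V → Fin 3,
      𝒱 = Finset.image (fun v : V => Sum.inl (v, ψ v)) Finset.univ := by
  classical
  obtain ⟨A, hAle⟩ := hA
  have hs2 : (2:ℝ) ≤ (m:ℝ) + (n:ℝ) := by
    have h : 2 ≤ m + n := by omega
    exact_mod_cast h
  have hm1' : (1:ℝ) ≤ (m:ℝ) := by exact_mod_cast hm1
  have hn0 : (0:ℝ) ≤ (n:ℝ) := Nat.cast_nonneg n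
  have hm0 : (0:ℝ) ≤ (m:ℝ) := Nat.cast_nonneg m
  have hs0 : (0:ℝ) < (m:ℝ) + (n:ℝ) := by linarith
  have hsq : (4:ℝ) ≤ ((m:ℝ) + (n:ℝ)) ^ 2 := by nlinarith
  have hcub : (32:ℝ) ≤ 4 * ((m:ℝ) + (n:ℝ)) ^ 3 := by
    nlinarith [mul_nonneg (sub_nonneg.mpr hs2) (sub_nonneg.mpr hsq)]
  have hd : (0:ℝ) < 4 * ((m:ℝ) + (n:ℝ)) ^ 3 := by linarith
  have htpos : 0 < t := by
    rw [ht]; exact div_pos one_pos hd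
  have ht32 : t ≤ 1 / 32 := by
    rw [ht, div_le_div_iff₀ hd (by norm_num)]
    linarith
  have ht1 : t ≤ 1 := le_trans ht32 (by norm_num)
  have hscube : 16 * ((m:ℝ) + (n:ℝ)) ≤ 4 * ((m:ℝ) + (n:ℝ)) ^ 3 := by
    nlinarith [mul_nonneg hs0.le (sub_nonneg.mpr hsq)]
  have hmt : (m:ℝ) * t ≤ 1 := by
    rw [ht, mul_one_div, div_le_one hd]
    linarith
  have hnt : (n:ℝ) * t ≤ 1 := by
    rw [ht, mul_one_div, div_le_one hd]
    linarith
  set B : ℝ := (m:ℝ) * t ^ 2 + 4 * (n:ℝ) * t ^ 6 + (m:ℝ) * t ^ 10 with hB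
  have hB0 : 0 ≤ B := by positivity
  set EE : ℝ := ∑ r, ∑ c, ((MG G t - Matrix.of (fun r (c : 𝒱) => MG G t r c.val) * A) r c)^2 with hEE
  have hE0 : 0 ≤ EE := by
    apply Finset.sum_nonneg
    intro r _
    apply Finset.sum_nonneg
    intro c _
    exact sq_nonneg _
  have hEB : EE ≤ B := by
    have h1 : Real.sqrt EE ≤ Real.sqrt B := by
      rw [hEE, hB]
      exact hAle
    calc EE = Real.sqrt EE ^ 2 := (Real.sq_sqrt hE0).symm
      _ ≤ Real.sqrt B ^ 2 := by
          apply pow_le_pow_left₀ (Real.sqrt_nonneg _) h1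
      _ = B := Real.sq_sqrt hB0
  have ht5 : t ^ 5 ≤ t := by
    calc t ^ 5 ≤ t ^ 1 := pow_le_pow_of_le_one htpos.le ht1 (by norm_num)
      _ = t := pow_one t
  have ht9 : t ^ 9 ≤ t := by
    calc t ^ 9 ≤ t ^ 1 := pow_le_pow_of_le_one htpos.le ht1 (by norm_num)
      _ = t := pow_one t
  have hBle : B ≤ 6 * t := by
    have h1 : (m:ℝ) * t ^ 2 ≤ t := by
      have he : (m:ℝ) * t ^ 2 = ((m:ℝ) * t) * t := by ring
      rw [he]
      calc ((m:ℝ) * t) * t ≤ 1 * t := mul_le_mul_of_nonneg_right hmt htpos.le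
        _ = t := one_mul t
    have h2 : 4 * (n:ℝ) * t ^ 6 ≤ 4 * t := by
      have he : 4 * (n:ℝ) * t ^ 6 = 4 * (((n:ℝ) * t) * t ^ 5) := by ring
      rw [he]
      have : ((n:ℝ) * t) * t ^ 5 ≤ 1 * t ^ 5 := mul_le_mul_of_nonneg_right hnt (by positivity)
      nlinarith
    have h3 : (m:ℝ) * t ^ 10 ≤ t := by
      have he : (m:ℝ) * t ^ 10 = ((m:ℝ) * t) * t ^ 9 := by ring
      rw [he]
      calc ((m:ℝ) * t) * t ^ 9 ≤ 1 * t ^ 9 := mul_le_mul_of_nonneg_right hmt (by positivity)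
        _ = t ^ 9 := one_mul _
        _ ≤ t := ht9
    rw [hB]
    linarith
  by_cases hmiss : ∀ v : V, ∃ i : Fin 3, Sum.inl (v, i) ∈ 𝒱
  · choose ψ hψ using hmiss
    have hinj : Function.Injective (fun v : V => (Sum.inl (v, ψ v) : (V × Fin 3) ⊕ G.edgeSet)) := by
      intro a b hab
      simpa using (Prod.ext_iff.mp (Sum.inl_injective hab)).1
    refine ⟨ψ, (Finset.eq_of_subset_of_card_le ?_ ?_).symm⟩
    · intro c hc
      obtain ⟨v, -, rfl⟩ := Finset.mem_image.mp hc
      exact hψ v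
    · rw [Finset.card_image_of_injective _ hinj, Finset.card_univ, hcard, hn]
  · exfalso
    push_neg at hmiss
    obtain ⟨v0, hv0⟩ := hmiss
    have hlow := missing_big G t htpos 𝒱 (hcard.trans hn) v0 hv0 A
    have : 1 - 2 * t ^ 2 ≤ EE := hlow
    nlinarith
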